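/- For real x, y, k, l, r with x ≥ y, k ≥ l ≥ r ≥ 0, and y - l ≥ x - k ≥ 0, the continuous binomial coefficients satisfy C(x,k)·C(y,l) ≥ C(x,k+r)·C(y,l-r). -/

import Mathlib

/-- The continuous binomial coefficient. -/
noncomputable def contBinom (x k : ℝ) : ℝ :=
  Real.Gamma (1 + x) / (Real.Gamma (1 + k) * Real.Gamma (1 + x - k))

open Real

/-- Gamma ratio monotonicity from log-convexity. -/
lemma gamma_ratio_mono {a b t : ℝ} (ha : 0 < a) (hab : a ≤ b) (ht : 0 ≤ t) :
    Real.Gamma (a + t) * Real.Gamma b ≤ Real.Gamma a * Real.Gamma (b + t) := by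
  rcases eq_or_lt_of_le ht with h | ht'
  · rw [← h, add_zero, add_zero, mul_comm]
  rcases eq_or_lt_of_le hab with h | hab'
  · rw [h, mul_comm]
  have hb : 0 < b := lt_of_lt_of_le ha hab
  have hc : 0 < b + t - a := by linarith
  set lam : ℝ := (b - a) / (b + t - a) with hlam
  set mu : ℝ := t / (b + t - a) with hmu
  have hlam0 : 0 ≤ lam := div_nonneg (by linarith) hc.le
  have hmu0 : 0 ≤ mu := div_nonneg ht hc.le
  have hsum : lam + mu = 1 := by
    rw [hlam, hmu, ← add_div, div_eq_one_iff_eq hc.ne']; ring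
  have hmem1 : a ∈ Set.Ioi (0:ℝ) := ha
  have hmem2 : b + t ∈ Set.Ioi (0:ℝ) := by simp; linarith
  have k1 := Real.convexOn_log_Gamma.2 hmem1 hmem2 hlam0 hmu0 hsum
  have k2 := Real.convexOn_log_Gamma.2 hmem1 hmem2 hmu0 hlam0 (by linarith)
  have e1 : lam • a + mu • (b + t) = a + t := by
    rw [smul_eq_mul, smul_eq_mul, hlam, hmu]; field_simp; ring
  have e2 : mu • a + lam • (b + t) = b := by
    rw [smul_eq_mul, smul_eq_mul, hlam, hmu]; field_simp; ring
  rw [e1] at k1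
  rw [e2] at k2
  simp only [Function.comp_apply, smul_eq_mul] at k1 k2
  have key : Real.log (Real.Gamma (a + t)) + Real.log (Real.Gamma b) ≤
      Real.log (Real.Gamma a) + Real.log (Real.Gamma (b + t)) := by
    have h' := add_le_add k1 k2
    have hmu' : mu = 1 - lam := by linarith
    have hrw : lam * Real.log (Real.Gamma a) + mu * Real.log (Real.Gamma (b + t)) +
        (mu * Real.log (Real.Gamma a) + lam * Real.log (Real.Gamma (b + t))) =
        Real.log (Real.Gamma a) + Real.log (Real.Gamma (b + t)) := by
      rw [hmu']; ring
    linarith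
  have p1 : 0 < Real.Gamma (a + t) := Real.Gamma_pos_of_pos (by linarith)
  have p2 : 0 < Real.Gamma b := Real.Gamma_pos_of_pos hb
  have p3 : 0 < Real.Gamma a := Real.Gamma_pos_of_pos ha
  have p4 : 0 < Real.Gamma (b + t) := Real.Gamma_pos_of_pos (by linarith)
  calc Real.Gamma (a + t) * Real.Gamma b
      = Real.exp (Real.log (Real.Gamma (a + t)) + Real.log (Real.Gamma b)) := by
        rw [Real.exp_add, Real.exp_log p1, Real.exp_log p2]
    _ ≤ Real.exp (Real.log (Real.Gamma a) + Real.log (Real.Gamma (b + t))) :=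
        Real.exp_le_exp.2 key
    _ = Real.Gamma a * Real.Gamma (b + t) := by
        rw [Real.exp_add, Real.exp_log p3, Real.exp_log p4]

/-- The inequality in the good region `x - k - r > -1`. -/
lemma core (x y k l r : ℝ) (hxy : x ≥ y) (hkl : k ≥ l) (hlr : l ≥ r) (hr : 0 ≤ r)
    (h1 : y - l ≥ x - k) (h2 : 0 ≤ x - k) (hs : -1 < x - k - r) :
    contBinom x (k + r) * contBinom y (l - r) ≤ contBinom x k * contBinom y l := by
  have pk : 0 < Real.Gamma (1 + k) := Real.Gamma_pos_of_pos (by linarith)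
  have pxk : 0 < Real.Gamma (1 + x - k) := Real.Gamma_pos_of_pos (by linarith)
  have pl : 0 < Real.Gamma (1 + l) := Real.Gamma_pos_of_pos (by linarith)
  have pyl : 0 < Real.Gamma (1 + y - l) := Real.Gamma_pos_of_pos (by linarith)
  have pkr : 0 < Real.Gamma (1 + (k + r)) := Real.Gamma_pos_of_pos (by linarith)
  have pxkr : 0 < Real.Gamma (1 + x - (k + r)) := Real.Gamma_pos_of_pos (by linarith)
  have plr : 0 < Real.Gamma (1 + (l - r)) := Real.Gamma_pos_of_pos (by linarith)
  have pylr : 0 < Real.Gamma (1 + y - (l - r)) := Real.Gamma_pos_of_pos (by linarith)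
  have px : 0 < Real.Gamma (1 + x) := Real.Gamma_pos_of_pos (by linarith)
  have py : 0 < Real.Gamma (1 + y) := Real.Gamma_pos_of_pos (by linarith)
  have e1 : Real.Gamma (1 + l) * Real.Gamma (1 + k) ≤
      Real.Gamma (1 + (l - r)) * Real.Gamma (1 + (k + r)) := by
    have := gamma_ratio_mono (a := 1 + (l - r)) (b := 1 + k) (t := r)
      (by linarith) (by linarith) hr
    rw [show (1 + (l - r)) + r = 1 + l by ring, show (1 + k) + r = 1 + (k + r) by ring] at this
    exact this
  have e2 : Real.Gamma (1 + x - k) * Real.Gamma (1 + y - l) ≤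
      Real.Gamma (1 + x - (k + r)) * Real.Gamma (1 + y - (l - r)) := by
    have := gamma_ratio_mono (a := 1 + x - (k + r)) (b := 1 + y - l) (t := r)
      (by linarith) (by linarith) hr
    rw [show (1 + x - (k + r)) + r = 1 + x - k by ring,
        show (1 + y - l) + r = 1 + y - (l - r) by ring] at this
    exact this
  have E := mul_le_mul e1 e2 (by positivity) (by positivity)
  unfold contBinom
  rw [div_mul_div_comm, div_mul_div_comm]
  apply (div_le_div_iff_of_pos_left (by positivity) (by positivity) (by positivity)).2
  nlinarith [E]

lemma lhs_nonneg (x y k l : ℝ) (hxy : x ≥ y) (hkl : k ≥ l) (hl : 0 ≤ l)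
    (h1 : y - l ≥ x - k) (h2 : 0 ≤ x - k) :
    0 ≤ contBinom x k * contBinom y l := by
  have pk : 0 < Real.Gamma (1 + k) := Real.Gamma_pos_of_pos (by linarith)
  have pxk : 0 < Real.Gamma (1 + x - k) := Real.Gamma_pos_of_pos (by linarith)
  have pl : 0 < Real.Gamma (1 + l) := Real.Gamma_pos_of_pos (by linarith)
  have pyl : 0 < Real.Gamma (1 + y - l) := Real.Gamma_pos_of_pos (by linarith)
  have px : 0 < Real.Gamma (1 + x) := Real.Gamma_pos_of_pos (by linarith)
  have py : 0 < Real.Gamma (1 + y) := Real.Gamma_pos_of_pos (by linarith)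
  unfold contBinom
  positivity

lemma good (x y k l r : ℝ) (hxy : x ≥ y) (hkl : k ≥ l) (hlr : l ≥ r) (hr : 0 ≤ r)
    (h1 : y - l ≥ x - k) (h2 : 0 ≤ x - k) (hs : -1 < x - k - r) :
    |contBinom x (k + r) * contBinom y (l - r)| ≤ contBinom x k * contBinom y l := by
  have pkr : 0 < Real.Gamma (1 + (k + r)) := Real.Gamma_pos_of_pos (by linarith)
  have pxkr : 0 < Real.Gamma (1 + x - (k + r)) := Real.Gamma_pos_of_pos (by linarith)
  have plr : 0 < Real.Gamma (1 + (l - r)) := Real.Gamma_pos_of_pos (by linarith)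
  have pylr : 0 < Real.Gamma (1 + y - (l - r)) := Real.Gamma_pos_of_pos (by linarith)
  have px : 0 < Real.Gamma (1 + x) := Real.Gamma_pos_of_pos (by linarith)
  have py : 0 < Real.Gamma (1 + y) := Real.Gamma_pos_of_pos (by linarith)
  have hnn : 0 ≤ contBinom x (k + r) * contBinom y (l - r) := by
    unfold contBinom; positivity
  rw [abs_of_nonneg hnn]
  exact core x y k l r hxy hkl hlr hr h1 h2 hs

lemma abs_claim : ∀ (n : ℕ) (x y k l r : ℝ), x ≥ y → k ≥ l → l ≥ r → 0 ≤ r →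
    y - l ≥ x - k → 0 ≤ x - k → r ≤ (n : ℝ) →
    |contBinom x (k + r) * contBinom y (l - r)| ≤ contBinom x k * contBinom y l := by
  intro n
  induction n with
  | zero =>
    intro x y k l r hxy hkl hlr hr h1 h2 hn
    have hr0 : r = 0 := le_antisymm (by simpa using hn) hr
    subst hr0
    exact good x y k l 0 hxy hkl hlr le_rfl h1 h2 (by linarith)
  | succ n ih =>
    intro x y k l r hxy hkl hlr hr h1 h2 hn
    rcases lt_or_ge (-1 : ℝ) (x - k - r) with hgood | hbad
    · exact good x y k l r hxy hkl hlr hr h1 h2 hgood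
    have hr1 : 1 ≤ r := by linarith
    rcases eq_or_lt_of_le hbad with heq | hlt
    · -- x - k - r = -1, so Γ(1 + x - (k+r)) = Γ 0 = 0 and the LHS vanishes
      have hz : Real.Gamma (1 + x - (k + r)) = 0 := by
        rw [show 1 + x - (k + r) = (0 : ℝ) by linarith]
        exact Real.Gamma_zero
      have h0 : contBinom x (k + r) = 0 := by
        unfold contBinom; rw [hz, mul_zero, div_zero]
      rw [h0, zero_mul, abs_zero]
      exact lhs_nonneg x y k l hxy hkl (by linarith) h1 h2
    · -- 1 + x - (k + r) < 0 : step down from r to r - 1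
      have hkr : (0:ℝ) < k + r := by linarith
      have hne : 1 + x - (k + r) ≠ 0 := by linarith
      have pA : 0 < Real.Gamma (1 + (k + (r - 1))) := Real.Gamma_pos_of_pos (by linarith)
      have id1 : contBinom x (k + r) =
          contBinom x (k + (r - 1)) * ((1 + x - k - r) / (k + r)) := by
        unfold contBinom
        have g1 : Real.Gamma (1 + (k + r)) =
            (1 + (k + (r - 1))) * Real.Gamma (1 + (k + (r - 1))) := by
          rw [show 1 + (k + r) = (1 + (k + (r - 1))) + 1 by ring,
            Real.Gamma_add_one (by linarith : (1:ℝ) + (k + (r - 1)) ≠ 0)]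
        have g2 : Real.Gamma (1 + x - (k + (r - 1))) =
            (1 + x - (k + r)) * Real.Gamma (1 + x - (k + r)) := by
          rw [show 1 + x - (k + (r - 1)) = (1 + x - (k + r)) + 1 by ring,
            Real.Gamma_add_one hne]
        rw [g1, g2]
        rcases eq_or_ne (Real.Gamma (1 + x - (k + r))) 0 with hB | hB
        · rw [hB]; simp
        · have h1ne : (1:ℝ) + (k + (r - 1)) ≠ 0 := by linarith
          field_simp [hne, hB, pA.ne', hkr.ne', h1ne]
          ring
      have pC : 0 < Real.Gamma (1 + (l - r)) := Real.Gamma_pos_of_pos (by linarith)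
      have pD : 0 < Real.Gamma (1 + y - (l - r)) := Real.Gamma_pos_of_pos (by linarith)
      have hylr : (0:ℝ) < y - l + r := by linarith
      have id2 : contBinom y (l - r) =
          contBinom y (l - (r - 1)) * ((1 + l - r) / (y - l + r)) := by
        unfold contBinom
        have g1 : Real.Gamma (1 + (l - (r - 1))) =
            (1 + (l - r)) * Real.Gamma (1 + (l - r)) := by
          rw [show 1 + (l - (r - 1)) = (1 + (l - r)) + 1 by ring,
            Real.Gamma_add_one (by linarith : (1:ℝ) + (l - r) ≠ 0)]
        have g2 : Real.Gamma (1 + y - (l - r)) =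
            (y - l + r) * Real.Gamma (1 + y - (l - (r - 1))) := by
          rw [show 1 + y - (l - r) = (1 + y - (l - (r - 1))) + 1 by ring,
            Real.Gamma_add_one (by linarith)]
          rw [show 1 + y - (l - (r - 1)) = y - l + r by ring]
        have pE : 0 < Real.Gamma (1 + y - (l - (r - 1))) := Real.Gamma_pos_of_pos (by linarith)
        rw [g1, g2]
        have h1ne : (1:ℝ) + (l - r) ≠ 0 := by linarith
        field_simp [pC.ne', pD.ne', pE.ne', hylr.ne', h1ne]
        ring
      have ratio : |(1 + x - k - r) / (k + r) * ((1 + l - r) / (y - l + r))| ≤ 1 := by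
        rw [abs_mul, abs_div, abs_div, abs_of_nonpos (by linarith : 1 + x - k - r ≤ 0),
          abs_of_pos hkr, abs_of_nonneg (by linarith : (0:ℝ) ≤ 1 + l - r), abs_of_pos hylr,
          div_mul_div_comm, div_le_one (mul_pos hkr hylr)]
        have f1 : -(1 + x - k - r) ≤ y - l + r := by linarith
        have f2 : 1 + l - r ≤ k + r := by linarith
        nlinarith [mul_le_mul f1 f2 (by linarith) (by linarith)]
      have ihs := ih x y k l (r - 1) hxy hkl (by linarith) (by linarith) h1 h2
        (by push_cast at hn ⊢; linarith)
      calc |contBinom x (k + r) * contBinom y (l - r)|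
          = |contBinom x (k + (r - 1)) * contBinom y (l - (r - 1))| *
            |(1 + x - k - r) / (k + r) * ((1 + l - r) / (y - l + r))| := by
            rw [id1, id2, ← abs_mul]
            congr 1
            ring
        _ ≤ |contBinom x (k + (r - 1)) * contBinom y (l - (r - 1))| * 1 :=
            mul_le_mul_of_nonneg_left ratio (abs_nonneg _)
        _ = |contBinom x (k + (r - 1)) * contBinom y (l - (r - 1))| := mul_one _
        _ ≤ contBinom x k * contBinom y l := ihs

theorem contBinom_strongly_log_concave
    (x y k l r : ℝ) (hxy : x ≥ y) (hkl : k ≥ l) (hlr : l ≥ r) (hr : r ≥ 0)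
    (h1 : y - l ≥ x - k) (h2 : x - k ≥ 0) :
    contBinom x k * contBinom y l ≥ contBinom x (k + r) * contBinom y (l - r) := by
  have h := abs_claim ⌈r⌉₊ x y k l r hxy hkl hlr hr h1 h2 (Nat.le_ceil r)
  exact le_trans (le_abs_self _) h
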